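/- Let E be a finite-dimensional real inner product space, F : E → ℝ differentiable with F ≥ 0, θ ∈ (0,1), and α > 0. Suppose F satisfies the Kurdyka–Łojasiewicz inequality α·F(u)^{1+θ} ≤ ‖∇F(u)‖² for every u ∈ E. Then every gradient-flow trajectory w : [0,∞) → E of F satisfies, for all t ≥ 0, F(w(t)) ≤ F(w(0)) / (1 + α θ F(w(0))^θ · t)^{1/θ}. -/

import Mathlib

open RealInnerProductSpace

/-- The Kurdyka–Łojasiewicz inequality implies a polynomial rate of convergence for
gradient flow. -/
theorem kl_implies_gradient_flow_rate
    {E : Type*} [NormedAddCommGroup E] [InnerProductSpace ℝ E] [FiniteDimensional ℝ E]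
    (F : E → ℝ) (hF : Differentiable ℝ F) (hFnonneg : ∀ u, 0 ≤ F u)
    (θ : ℝ) (hθ : θ ∈ Set.Ioo (0 : ℝ) 1) (α : ℝ) (hα : 0 < α)
    (hKL : ∀ u : E, α * F u ^ (1 + θ) ≤ ‖gradient F u‖ ^ 2)
    (w : ℝ → E)
    (hw : ∀ t : ℝ, 0 ≤ t → HasDerivAt w (-gradient F (w t)) t) :
    ∀ t : ℝ, 0 ≤ t →
      F (w t) ≤ F (w 0) / (1 + α * θ * F (w 0) ^ θ * t) ^ (1 / θ) := by
  obtain ⟨hθ0, hθ1⟩ := hθ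
  intro t ht
  set g : ℝ → ℝ := fun s => F (w s) with hgdef
  -- derivative of g
  have hgderiv : ∀ s, 0 ≤ s → HasDerivAt g (-‖gradient F (w s)‖ ^ 2) s := by
    intro s hs
    have h1 : HasFDerivAt F (InnerProductSpace.toDual ℝ E (gradient F (w s))) (w s) :=
      (hF (w s)).hasGradientAt.hasFDerivAt
    have h2 := h1.comp_hasDerivAt s (hw s hs)
    refine h2.congr_deriv ?_
    simp only [InnerProductSpace.toDual_apply_apply, inner_neg_right, real_inner_self_eq_norm_sq]
  -- g is antitone on [0, ∞)
  have hganti : AntitoneOn g (Set.Ici 0) := by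
    apply antitoneOn_of_deriv_nonpos (convex_Ici 0)
    · exact fun s hs => (hgderiv s hs).continuousAt.continuousWithinAt
    · intro s hs
      rw [interior_Ici] at hs
      exact (hgderiv s hs.le).differentiableAt.differentiableWithinAt
    · intro s hs
      rw [interior_Ici] at hs
      rw [(hgderiv s hs.le).deriv]
      exact neg_nonpos.mpr (by positivity)
  -- denominator is positive
  have hDpos : (0:ℝ) < 1 + α * θ * g 0 ^ θ * t := by
    have : 0 ≤ α * θ * g 0 ^ θ * t := by
      have := hFnonneg (w 0)
      positivity
    linarith
  have hRHSpos : (0:ℝ) < (1 + α * θ * g 0 ^ θ * t) ^ (1/θ) :=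
    Real.rpow_pos_of_pos hDpos _
  rcases eq_or_lt_of_le (hFnonneg (w t)) with hgt0 | hgt0
  · -- trivial case: F (w t) = 0
    rw [← hgt0]
    exact div_nonneg (hFnonneg (w 0)) hRHSpos.le
  -- main case: g t > 0, hence g > 0 on [0, t]
  have hpos : ∀ s ∈ Set.Icc (0:ℝ) t, 0 < g s := by
    intro s hs
    exact lt_of_lt_of_le hgt0 (hganti (Set.mem_Ici.mpr hs.1) (Set.mem_Ici.mpr ht) hs.2)
  have hg0pos : 0 < g 0 := hpos 0 ⟨le_refl 0, ht⟩
  -- the function φ s = g s ^ (-θ) - α θ s is monotone on [0, t]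
  have hφderiv : ∀ s ∈ Set.Icc (0:ℝ) t, HasDerivAt (fun s => g s ^ (-θ) - α * θ * s)
      (-‖gradient F (w s)‖ ^ 2 * (-θ) * g s ^ (-θ - 1) - α * θ) s := by
    intro s hs
    exact (((hgderiv s hs.1).rpow_const (Or.inl (hpos s hs).ne')).sub
      ((hasDerivAt_id s).const_mul (α * θ))).congr_deriv (by ring)
  have hφmono : MonotoneOn (fun s => g s ^ (-θ) - α * θ * s) (Set.Icc 0 t) := by
    apply monotoneOn_of_deriv_nonneg (convex_Icc 0 t)
    · exact fun s hs => (hφderiv s hs).continuousAt.continuousWithinAt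
    · intro s hs
      rw [interior_Icc] at hs
      exact (hφderiv s ⟨hs.1.le, hs.2.le⟩).differentiableAt.differentiableWithinAt
    · intro s hs
      rw [interior_Icc] at hs
      have hs' : s ∈ Set.Icc (0:ℝ) t := ⟨hs.1.le, hs.2.le⟩
      rw [(hφderiv s hs').deriv]
      have hgs := hpos s hs'
      have hkl := hKL (w s)
      have hprod : g s ^ (-θ - 1) * g s ^ (1 + θ) = 1 := by
        rw [← Real.rpow_add hgs, show -θ - 1 + (1 + θ) = 0 by ring, Real.rpow_zero]
      have h1 := mul_le_mul_of_nonneg_left hkl (Real.rpow_nonneg hgs.le (-θ - 1))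
      have heq : g s ^ (-θ - 1) * (α * F (w s) ^ (1 + θ)) = α := by
        rw [mul_comm α, ← mul_assoc]
        show g s ^ (-θ - 1) * g s ^ (1 + θ) * α = α
        rw [hprod, one_mul]
      rw [heq] at h1
      nlinarith [mul_le_mul_of_nonneg_left h1 hθ0.le]
  -- conclude g t ^ (-θ) ≥ g 0 ^ (-θ) + α θ t
  have hkey : g 0 ^ (-θ) + α * θ * t ≤ g t ^ (-θ) := by
    have := hφmono (Set.left_mem_Icc.mpr ht) (Set.right_mem_Icc.mpr ht) ht
    simp only [mul_zero, sub_zero] at this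
    linarith
  -- algebra
  have hB : g 0 ^ (-θ) + α * θ * t = g 0 ^ (-θ) * (1 + α * θ * g 0 ^ θ * t) := by
    have h1 : g 0 ^ (-θ) * g 0 ^ θ = 1 := by
      rw [← Real.rpow_add hg0pos, show -θ + θ = 0 by ring, Real.rpow_zero]
    rw [mul_add, mul_one]
    congr 1
    rw [show g 0 ^ (-θ) * (α * θ * g 0 ^ θ * t) = g 0 ^ (-θ) * g 0 ^ θ * (α * θ * t) by ring,
      h1, one_mul]
  have hBpos : 0 < g 0 ^ (-θ) * (1 + α * θ * g 0 ^ θ * t) :=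
    mul_pos (Real.rpow_pos_of_pos hg0pos _) hDpos
  rw [hB] at hkey
  -- apply x ↦ x ^ (-1/θ) (antitone on positives)
  have h2 : (g t ^ (-θ)) ^ (-(1/θ)) ≤ (g 0 ^ (-θ) * (1 + α * θ * g 0 ^ θ * t)) ^ (-(1/θ)) :=
    Real.rpow_le_rpow_of_nonpos hBpos hkey (neg_nonpos.mpr (by positivity))
  have h3 : (g t ^ (-θ)) ^ (-(1/θ)) = g t := by
    rw [← Real.rpow_mul hgt0.le, show -θ * -(1/θ) = 1 by field_simp, Real.rpow_one]
  have h4 : (g 0 ^ (-θ) * (1 + α * θ * g 0 ^ θ * t)) ^ (-(1/θ))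
      = g 0 / (1 + α * θ * g 0 ^ θ * t) ^ (1/θ) := by
    rw [Real.mul_rpow (Real.rpow_nonneg hg0pos.le _) hDpos.le]
    rw [← Real.rpow_mul hg0pos.le]
    rw [show -θ * -(1/θ) = 1 by field_simp]
    rw [Real.rpow_one, Real.rpow_neg hDpos.le]
    ring
  calc F (w t) = (g t ^ (-θ)) ^ (-(1/θ)) := h3.symm
    _ ≤ (g 0 ^ (-θ) * (1 + α * θ * g 0 ^ θ * t)) ^ (-(1/θ)) := h2
    _ = g 0 / (1 + α * θ * g 0 ^ θ * t) ^ (1/θ) := h4
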